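/- Concentration for exponential families: for every θ ∈ Φ and β ∈ (0,1], P_{X∼P_θ}( |X − A'(θ)| ≥ 2·sqrt(A''(θ))·sqrt(ln(2/β)) + ln(2/β)/κ(θ) ) ≤ β. -/

import Mathlib

open MeasureTheory Real

private lemma taylor_right (f f' f'' : ℝ → ℝ) (a b C : ℝ) (hab : a ≤ b)
    (hf : ∀ x ∈ Set.Icc a b, HasDerivAt f (f' x) x)
    (hf' : ∀ x ∈ Set.Icc a b, HasDerivAt f' (f'' x) x)
    (hbdd : ∀ x ∈ Set.Icc a b, f'' x ≤ 2 * C) :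
    f b ≤ f a + (b - a) * f' a + (b - a) ^ 2 * C := by
  have hD : Convex ℝ (Set.Icc a b) := convex_Icc a b
  set g' : ℝ → ℝ := fun x => f' x - f' a - 2 * (x - a) * C with hg'def
  have hg'd : ∀ x ∈ Set.Icc a b, HasDerivAt g' (f'' x - 2 * C) x := by
    intro x hx
    have h1 : HasDerivAt (fun y : ℝ => 2 * (y - a) * C) (2 * C) x := by
      have := (((hasDerivAt_id x).sub_const a).const_mul 2).mul_const C
      simpa using this
    simpa [hg'def, Pi.sub_def] using ((hf' x hx).sub_const (f' a)).sub h1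
  have hanti : AntitoneOn g' (Set.Icc a b) := by
    apply antitoneOn_of_deriv_nonpos hD
    · exact fun x hx => (hg'd x hx).continuousAt.continuousWithinAt
    · intro x hx
      exact ((hg'd x (interior_subset hx)).differentiableAt).differentiableWithinAt
    · intro x hx
      rw [(hg'd x (interior_subset hx)).deriv]
      have := hbdd x (interior_subset hx); linarith
  have hg'le : ∀ x ∈ Set.Icc a b, g' x ≤ 0 := by
    intro x hx
    have h0 : g' a = 0 := by simp [hg'def]
    have := hanti (Set.left_mem_Icc.2 hab) hx hx.1
    linarith
  set g : ℝ → ℝ := fun x => f x - (x - a) * f' a - (x - a) ^ 2 * C with hgdef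
  have hgd : ∀ x ∈ Set.Icc a b, HasDerivAt g (g' x) x := by
    intro x hx
    have h1 : HasDerivAt (fun y : ℝ => (y - a) * f' a) (f' a) x := by
      simpa using ((hasDerivAt_id x).sub_const a).mul_const (f' a)
    have h2 : HasDerivAt (fun y : ℝ => (y - a) ^ 2 * C) (2 * (x - a) * C) x := by
      have := (((hasDerivAt_id x).sub_const a).pow 2).mul_const C
      simpa [mul_comm, mul_assoc] using this
    have := ((hf x hx).sub h1).sub h2
    simpa [hgdef, hg'def, Pi.sub_def] using this
  have hganti : AntitoneOn g (Set.Icc a b) := by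
    apply antitoneOn_of_deriv_nonpos hD
    · exact fun x hx => (hgd x hx).continuousAt.continuousWithinAt
    · intro x hx
      exact ((hgd x (interior_subset hx)).differentiableAt).differentiableWithinAt
    · intro x hx
      rw [(hgd x (interior_subset hx)).deriv]
      exact hg'le x (interior_subset hx)
  have h := hganti (Set.left_mem_Icc.2 hab) (Set.right_mem_Icc.2 hab) hab
  have h2 : f b - (b - a) * f' a - (b - a) ^ 2 * C ≤ f a := by simpa [hgdef] using h
  linarith

private lemma taylor_left (f f' f'' : ℝ → ℝ) (a b C : ℝ) (hab : a ≤ b)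
    (hf : ∀ x ∈ Set.Icc a b, HasDerivAt f (f' x) x)
    (hf' : ∀ x ∈ Set.Icc a b, HasDerivAt f' (f'' x) x)
    (hbdd : ∀ x ∈ Set.Icc a b, f'' x ≤ 2 * C) :
    f a ≤ f b + (a - b) * f' b + (a - b) ^ 2 * C := by
  have hD : Convex ℝ (Set.Icc a b) := convex_Icc a b
  set g' : ℝ → ℝ := fun x => f' x - f' b - 2 * (x - b) * C with hg'def
  have hg'd : ∀ x ∈ Set.Icc a b, HasDerivAt g' (f'' x - 2 * C) x := by
    intro x hx
    have h1 : HasDerivAt (fun y : ℝ => 2 * (y - b) * C) (2 * C) x := by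
      have := (((hasDerivAt_id x).sub_const b).const_mul 2).mul_const C
      simpa using this
    simpa [hg'def, Pi.sub_def] using ((hf' x hx).sub_const (f' b)).sub h1
  have hanti : AntitoneOn g' (Set.Icc a b) := by
    apply antitoneOn_of_deriv_nonpos hD
    · exact fun x hx => (hg'd x hx).continuousAt.continuousWithinAt
    · intro x hx
      exact ((hg'd x (interior_subset hx)).differentiableAt).differentiableWithinAt
    · intro x hx
      rw [(hg'd x (interior_subset hx)).deriv]
      have := hbdd x (interior_subset hx); linarith
  have hg'ge : ∀ x ∈ Set.Icc a b, 0 ≤ g' x := by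
    intro x hx
    have h0 : g' b = 0 := by simp [hg'def]
    have := hanti hx (Set.right_mem_Icc.2 hab) hx.2
    linarith
  set g : ℝ → ℝ := fun x => f x - (x - b) * f' b - (x - b) ^ 2 * C with hgdef
  have hgd : ∀ x ∈ Set.Icc a b, HasDerivAt g (g' x) x := by
    intro x hx
    have h1 : HasDerivAt (fun y : ℝ => (y - b) * f' b) (f' b) x := by
      simpa using ((hasDerivAt_id x).sub_const b).mul_const (f' b)
    have h2 : HasDerivAt (fun y : ℝ => (y - b) ^ 2 * C) (2 * (x - b) * C) x := by
      have := (((hasDerivAt_id x).sub_const b).pow 2).mul_const C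
      simpa [mul_comm, mul_assoc] using this
    have := ((hf x hx).sub h1).sub h2
    simpa [hgdef, hg'def, Pi.sub_def] using this
  have hgmono : MonotoneOn g (Set.Icc a b) := by
    apply monotoneOn_of_deriv_nonneg hD
    · exact fun x hx => (hgd x hx).continuousAt.continuousWithinAt
    · intro x hx
      exact ((hgd x (interior_subset hx)).differentiableAt).differentiableWithinAt
    · intro x hx
      rw [(hgd x (interior_subset hx)).deriv]
      exact hg'ge x (interior_subset hx)
  have h := hgmono (Set.left_mem_Icc.2 hab) (Set.right_mem_Icc.2 hab) hab
  have h2 : f a - (a - b) * f' b - (a - b) ^ 2 * C ≤ f b := by simpa [hgdef] using h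
  linarith

private lemma chernoff_aux (μ : Measure ℝ) (S : Set ℝ) (hS : MeasurableSet S)
    (f g : ℝ → ℝ) (hf : Integrable f μ) (hg : Integrable g μ)
    (hg0 : ∀ x, 0 ≤ g x) (hle : ∀ x ∈ S, f x ≤ g x) :
    ∫ x in S, f x ∂μ ≤ ∫ x, g x ∂μ :=
  le_trans (setIntegral_mono_on hf.integrableOn hg.integrableOn hS hle)
    (setIntegral_le_integral hg (ae_of_all _ hg0))

set_option maxHeartbeats 1000000 in
/-- Concentration for exponential families: for every `θ ∈ Φ` and `β ∈ (0,1]`,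
`P_{X∼P_θ}(|X − A'(θ)| ≥ 2·√(A''(θ))·√(ln(2/β)) + ln(2/β)/κ(θ)) ≤ β`,
where `κ(θ)` is a radius within which the variance `A''` is 2-stable. -/
theorem concentration_exponential_family (μ : Measure ℝ) (A A' A'' : ℝ → ℝ) (θ κ β : ℝ)
    (hβ : β ∈ Set.Ioc (0 : ℝ) 1) (hκ : 0 < κ)
    (hA : ∀ t ∈ Set.Icc (θ - κ) (θ + κ), A t = Real.log (∫ x, Real.exp (t * x) ∂μ))
    (hΦ : ∀ t ∈ Set.Icc (θ - κ) (θ + κ), Integrable (fun x => Real.exp (t * x)) μ)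
    (hA' : ∀ t ∈ Set.Icc (θ - κ) (θ + κ), HasDerivAt A (A' t) t)
    (hA'' : ∀ t ∈ Set.Icc (θ - κ) (θ + κ), HasDerivAt A' (A'' t) t)
    (hstab : ∀ t ∈ Set.Icc (θ - κ) (θ + κ),
        0 < A'' t ∧ A'' θ / A'' t ∈ Set.Icc (1 / 2 : ℝ) 2) :
    ∫ x in {x : ℝ |
        2 * Real.sqrt (A'' θ) * Real.sqrt (Real.log (2 / β)) + Real.log (2 / β) / κ
          ≤ |x - A' θ|},
      Real.exp (θ * x - A θ) ∂μ ≤ β := by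
  obtain ⟨hβ0, hβ1⟩ := hβ
  by_cases hμ : μ = 0
  · simp [hμ]; linarith
  -- basic quantities
  set L := Real.log (2 / β) with hLdef
  have hL : 0 < L := Real.log_pos (by rw [lt_div_iff₀ hβ0]; linarith)
  set t := 2 * Real.sqrt (A'' θ) * Real.sqrt L + L / κ with htdef
  have hθmem : θ ∈ Set.Icc (θ - κ) (θ + κ) := ⟨by linarith, by linarith⟩
  have hσ : 0 < A'' θ := (hstab θ hθmem).1
  set s := Real.sqrt (A'' θ) with hsdef
  have hs : 0 < s := Real.sqrt_pos.2 hσ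
  have hs2 : s ^ 2 = A'' θ := Real.sq_sqrt hσ.le
  have hsL : 0 < Real.sqrt L := Real.sqrt_pos.2 hL
  set lam := min κ (Real.sqrt L / s) with hlamdef
  have hlam0 : 0 < lam := lt_min hκ (div_pos hsL hs)
  have hlamκ : lam ≤ κ := min_le_left _ _
  have ht : 0 < t := by
    have : 0 < L / κ := div_pos hL hκ
    have h2 : 0 ≤ 2 * s * Real.sqrt L := by positivity
    rw [htdef]; linarith
  -- variance bound on the interval
  have hVbd : ∀ u ∈ Set.Icc (θ - κ) (θ + κ), A'' u ≤ 2 * A'' θ := by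
    intro u hu
    obtain ⟨hpos, hlo, _⟩ := hstab u hu
    have := (le_div_iff₀ hpos).1 hlo
    linarith
  -- memberships
  have hpmem : θ + lam ∈ Set.Icc (θ - κ) (θ + κ) := ⟨by linarith, by linarith⟩
  have hmmem : θ - lam ∈ Set.Icc (θ - κ) (θ + κ) := ⟨by linarith, by linarith⟩
  have hsub_p : Set.Icc θ (θ + lam) ⊆ Set.Icc (θ - κ) (θ + κ) :=
    Set.Icc_subset_Icc (by linarith) (by linarith)
  have hsub_m : Set.Icc (θ - lam) θ ⊆ Set.Icc (θ - κ) (θ + κ) :=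
    Set.Icc_subset_Icc (by linarith) (by linarith)
  -- exp (A u) = ∫ exp (u x)
  have hexpA : ∀ u ∈ Set.Icc (θ - κ) (θ + κ), ∫ x, Real.exp (u * x) ∂μ = Real.exp (A u) := by
    intro u hu
    have hpos : 0 < ∫ x, Real.exp (u * x) ∂μ := by
      rw [integral_pos_iff_support_of_nonneg (fun x => (Real.exp_pos _).le) (hΦ u hu)]
      have : Function.support (fun x : ℝ => Real.exp (u * x)) = Set.univ := by
        ext x; simp [Function.support, Real.exp_ne_zero]
      rw [this]
      exact Measure.measure_univ_pos.2 hμ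
    rw [hA u hu, Real.exp_log hpos]
  -- integrability of the density
  have hf : Integrable (fun x => Real.exp (θ * x - A θ)) μ := by
    simpa [Real.exp_sub] using (hΦ θ hθmem).div_const (Real.exp (A θ))
  -- Taylor bounds
  have hTp : A (θ + lam) ≤ A θ + lam * A' θ + lam ^ 2 * A'' θ := by
    have h := taylor_right A A' A'' θ (θ + lam) (A'' θ) (by linarith)
      (fun x hx => hA' x (hsub_p hx)) (fun x hx => hA'' x (hsub_p hx))
      (fun x hx => hVbd x (hsub_p hx))
    simpa using h
  have hTm : A (θ - lam) ≤ A θ - lam * A' θ + lam ^ 2 * A'' θ := by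
    have h := taylor_left A A' A'' (θ - lam) θ (A'' θ) (by linarith)
      (fun x hx => hA' x (hsub_m hx)) (fun x hx => hA'' x (hsub_m hx))
      (fun x hx => hVbd x (hsub_m hx))
    have e1 : θ - lam - θ = -lam := by ring
    rw [e1] at h
    nlinarith [h]
  -- key arithmetic inequality
  have hkey : lam ^ 2 * A'' θ - lam * t ≤ -L := by
    rcases le_total κ (Real.sqrt L / s) with hc | hc
    · have hlameq : lam = κ := min_eq_left hc
      have hks : κ * s ≤ Real.sqrt L := (le_div_iff₀ hs).1 hc
      rw [hlameq, htdef, ← hs2]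
      have h1 : κ * (L / κ) = L := mul_div_cancel₀ L (ne_of_gt hκ)
      nlinarith [mul_pos hκ hs, hsL]
    · have hlameq : lam = Real.sqrt L / s := min_eq_right hc
      have hls : lam * s = Real.sqrt L := by
        rw [hlameq]; field_simp
      have hl2 : lam ^ 2 * A'' θ = L := by
        rw [← hs2]
        have : lam ^ 2 * s ^ 2 = (lam * s) ^ 2 := by ring
        rw [this, hls, Real.sq_sqrt hL.le]
      have hlt : lam * t = 2 * L + lam * (L / κ) := by
        have h1 : lam * (2 * s * Real.sqrt L) = 2 * (lam * s * Real.sqrt L) := by ring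
        rw [htdef, mul_add, h1, hls, Real.mul_self_sqrt hL.le]
      have hnn : 0 ≤ lam * (L / κ) := by positivity
      rw [hl2, hlt]; linarith
  have hhalf : Real.exp (lam ^ 2 * A'' θ - lam * t) ≤ β / 2 := by
    have h1 : Real.exp (lam ^ 2 * A'' θ - lam * t) ≤ Real.exp (-L) := Real.exp_le_exp.2 hkey
    have h2 : Real.exp (-L) = β / 2 := by
      rw [hLdef, Real.exp_neg, Real.exp_log (by positivity : (0:ℝ) < 2 / β)]
      field_simp
    linarith
  -- the two tail sets
  set Sp := Set.Ici (A' θ + t) with hSpdef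
  set Sm := Set.Iic (A' θ - t) with hSmdef
  have hSpm : MeasurableSet Sp := measurableSet_Ici
  have hSmm : MeasurableSet Sm := measurableSet_Iic
  have hSU : {x : ℝ | t ≤ |x - A' θ|} = Sp ∪ Sm := by
    ext x
    simp only [Set.mem_setOf_eq, Set.mem_union, le_abs, hSpdef, hSmdef,
      Set.mem_Ici, Set.mem_Iic]
    constructor
    · rintro (h | h)
      · left; linarith
      · right; linarith
    · rintro (h | h)
      · left; linarith
      · right; linarith
  have hdisj : Disjoint Sp Sm := by
    rw [Set.disjoint_left]
    intro x hx1 hx2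
    simp only [hSpdef, hSmdef, Set.mem_Ici, Set.mem_Iic] at hx1 hx2
    linarith
  -- upper tail bound
  have hUp : ∫ x in Sp, Real.exp (θ * x - A θ) ∂μ ≤
      Real.exp (A (θ + lam) - A θ - lam * (A' θ + t)) := by
    have hg : Integrable (fun x => Real.exp (-(lam * (A' θ + t)) - A θ) *
        Real.exp ((θ + lam) * x)) μ := (hΦ _ hpmem).const_mul _
    have hb := chernoff_aux μ Sp hSpm _ _ hf hg (fun x => by positivity)
      (fun x hx => by
        rw [← Real.exp_add]
        apply Real.exp_le_exp.2
        have hx' : A' θ + t ≤ x := Set.mem_Ici.1 hx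
        nlinarith [hlam0.le])
    calc ∫ x in Sp, Real.exp (θ * x - A θ) ∂μ
        ≤ ∫ x, Real.exp (-(lam * (A' θ + t)) - A θ) * Real.exp ((θ + lam) * x) ∂μ := hb
      _ = Real.exp (-(lam * (A' θ + t)) - A θ) * ∫ x, Real.exp ((θ + lam) * x) ∂μ :=
          integral_const_mul _ _
      _ = Real.exp (A (θ + lam) - A θ - lam * (A' θ + t)) := by
          rw [hexpA _ hpmem, ← Real.exp_add]; ring_nf
  -- lower tail bound
  have hLo : ∫ x in Sm, Real.exp (θ * x - A θ) ∂μ ≤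
      Real.exp (A (θ - lam) - A θ + lam * (A' θ - t)) := by
    have hg : Integrable (fun x => Real.exp (lam * (A' θ - t) - A θ) *
        Real.exp ((θ - lam) * x)) μ := (hΦ _ hmmem).const_mul _
    have hb := chernoff_aux μ Sm hSmm _ _ hf hg (fun x => by positivity)
      (fun x hx => by
        rw [← Real.exp_add]
        apply Real.exp_le_exp.2
        have hx' : x ≤ A' θ - t := Set.mem_Iic.1 hx
        nlinarith [hlam0.le])
    calc ∫ x in Sm, Real.exp (θ * x - A θ) ∂μ
        ≤ ∫ x, Real.exp (lam * (A' θ - t) - A θ) * Real.exp ((θ - lam) * x) ∂μ := hb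
      _ = Real.exp (lam * (A' θ - t) - A θ) * ∫ x, Real.exp ((θ - lam) * x) ∂μ :=
          integral_const_mul _ _
      _ = Real.exp (A (θ - lam) - A θ + lam * (A' θ - t)) := by
          rw [hexpA _ hmmem, ← Real.exp_add]; ring_nf
  -- combine
  have hUp2 : ∫ x in Sp, Real.exp (θ * x - A θ) ∂μ ≤ β / 2 := by
    refine le_trans hUp (le_trans (Real.exp_le_exp.2 ?_) hhalf)
    nlinarith [hTp]
  have hLo2 : ∫ x in Sm, Real.exp (θ * x - A θ) ∂μ ≤ β / 2 := by
    refine le_trans hLo (le_trans (Real.exp_le_exp.2 ?_) hhalf)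
    nlinarith [hTm]
  rw [hSU, setIntegral_union hdisj hSmm hf.integrableOn hf.integrableOn]
  linarith
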